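/- If every vertex of the ring R^n has threshold 2, then a set S is a TWC target set if and only if every vertex not in S has both neighbors in S simultaneously active at some round; consequently the minimum size of a TWC target set for R^n is ⌈n/2⌉, for every window size λ ≥ 1. -/

import Mathlib

set_option linter.unusedVariables false

open Finset

variable {V : Type*} [Fintype V] [DecidableEq V]

/-- `influenced G t lam S r` : set of influenced nodes after round `r`. -/
def influenced (G : SimpleGraph V) [DecidableRel G.Adj] (t : V → ℕ) (lam : ℕ)
    (S : Finset V) : ℕ → Finset V
  | 0 => S
  | r + 1 =>
    let prev := influenced G t lam S r
    let A := if r + 1 ≤ lam then prev else prev \ influenced G t lam S (r - lam)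
    prev ∪ Finset.univ.filter fun v => t v ≤ (G.neighborFinset v ∩ A).card
  termination_by r => r
  decreasing_by all_goals omega

/-- `activeSet G t lam S r` : set of active nodes at round `r`. -/
def activeSet (G : SimpleGraph V) [DecidableRel G.Adj] (t : V → ℕ) (lam : ℕ)
    (S : Finset V) (r : ℕ) : Finset V :=
  if r = 0 then ∅
  else if r ≤ lam then influenced G t lam S (r - 1)
  else influenced G t lam S (r - 1) \ influenced G t lam S (r - 1 - lam)

def isTargetSet (G : SimpleGraph V) [DecidableRel G.Adj] (t : V → ℕ) (lam : ℕ)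
    (S : Finset V) : Prop :=
  ∃ r, influenced G t lam S r = Finset.univ

def pathGraph (n : ℕ) : SimpleGraph (Fin n) where
  Adj i j := i.val + 1 = j.val ∨ j.val + 1 = i.val
  symm := ⟨fun i j h => h.symm⟩
  loopless := ⟨fun i h => by rcases h with h | h <;> omega⟩

instance (n : ℕ) : DecidableRel (pathGraph n).Adj :=
  fun i j => inferInstanceAs (Decidable (i.val + 1 = j.val ∨ j.val + 1 = i.val))

def ringGraph (n : ℕ) : SimpleGraph (Fin n) where
  Adj i j := i ≠ j ∧ ((i.val + 1) % n = j.val ∨ (j.val + 1) % n = i.val)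
  symm := ⟨fun i j h => ⟨h.1.symm, h.2.symm⟩⟩
  loopless := ⟨fun i h => h.1 rfl⟩

instance (n : ℕ) : DecidableRel (ringGraph n).Adj :=
  fun i j => inferInstanceAs (Decidable (_ ∧ (_ ∨ _)))

instance : DecidableRel (⊤ : SimpleGraph V).Adj :=
  fun a b => inferInstanceAs (Decidable (a ≠ b))


section aux
variable {V : Type*} [Fintype V] [DecidableEq V]

lemma influenced_succ (G : SimpleGraph V) [DecidableRel G.Adj] (t : V → ℕ) (lam : ℕ)
    (S : Finset V) (r : ℕ) :
    influenced G t lam S (r+1) = influenced G t lam S r ∪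
      Finset.univ.filter
        (fun v => t v ≤ ((G.neighborFinset v) ∩ (activeSet G t lam S (r+1))).card) := by
  rw [influenced, activeSet]
  simp only [Nat.succ_ne_zero, if_false, Nat.add_sub_cancel]

lemma influenced_mono (G : SimpleGraph V) [DecidableRel G.Adj] (t : V → ℕ) (lam : ℕ)
    (S : Finset V) : Monotone (influenced G t lam S) := by
  apply monotone_nat_of_le_succ
  intro r
  rw [influenced_succ]
  exact Finset.subset_union_left

lemma activeSet_subset (G : SimpleGraph V) [DecidableRel G.Adj] (t : V → ℕ) (lam : ℕ)
    (S : Finset V) (r : ℕ) :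
    activeSet G t lam S r ⊆ influenced G t lam S (r - 1) := by
  rw [activeSet]
  split_ifs
  · exact Finset.empty_subset _
  · exact subset_rfl
  · exact Finset.sdiff_subset

lemma mem_influenced_iff (G : SimpleGraph V) [DecidableRel G.Adj] (t : V → ℕ) (lam : ℕ)
    (S : Finset V) (r : ℕ) (v : V) :
    v ∈ influenced G t lam S r ↔
      v ∈ S ∨ ∃ r', r' ≤ r ∧ 1 ≤ r' ∧
        t v ≤ ((G.neighborFinset v) ∩ (activeSet G t lam S r')).card := by
  induction r with
  | zero =>
    rw [influenced]
    constructor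
    · intro h; exact Or.inl h
    · rintro (h | ⟨r', hr, h1, _⟩); · exact h
      omega
  | succ r ih =>
    rw [influenced_succ, Finset.mem_union, Finset.mem_filter, ih]
    constructor
    · rintro ((h | ⟨r', hr, h1, hc⟩) | ⟨-, hc⟩)
      · exact Or.inl h
      · exact Or.inr ⟨r', by omega, h1, hc⟩
      · exact Or.inr ⟨r+1, le_rfl, by omega, hc⟩
    · rintro (h | ⟨r', hr, h1, hc⟩)
      · exact Or.inl (Or.inl h)
      · rcases Nat.lt_or_ge r' (r+1) with h2 | h2
        · exact Or.inl (Or.inr ⟨r', by omega, h1, hc⟩)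
        · obtain rfl : r' = r + 1 := by omega
          exact Or.inr ⟨Finset.mem_univ v, hc⟩

end aux
section ring

lemma ring_succ_lt (n : ℕ) (v : Fin n) : (v.val + 1) % n < n :=
  Nat.mod_lt _ v.pos

lemma ring_pred_lt (n : ℕ) (v : Fin n) : (v.val + n - 1) % n < n :=
  Nat.mod_lt _ v.pos

lemma mod_succ_eq (n a : ℕ) (ha : a < n) :
    (a + 1) % n = if a + 1 = n then 0 else a + 1 := by
  split_ifs with h
  · rw [h, Nat.mod_self]
  · exact Nat.mod_eq_of_lt (by omega)

lemma mod_pred_eq (n a : ℕ) (ha : a < n) :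
    (a + n - 1) % n = if a = 0 then n - 1 else a - 1 := by
  split_ifs with h
  · subst h; rw [Nat.zero_add]; exact Nat.mod_eq_of_lt (by omega)
  · have : a + n - 1 = (a - 1) + n := by omega
    rw [this, Nat.add_mod_right]
    exact Nat.mod_eq_of_lt (by omega)

lemma ring_neighborFinset {n : ℕ} (hn : 3 ≤ n) (v : Fin n) :
    (ringGraph n).neighborFinset v =
      {⟨(v.val + 1) % n, ring_succ_lt n v⟩, ⟨(v.val + n - 1) % n, ring_pred_lt n v⟩} := by
  have hv := v.isLt
  have hs := mod_succ_eq n v.val hv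
  have hp := mod_pred_eq n v.val hv
  ext u
  have hu := u.isLt
  rw [SimpleGraph.mem_neighborFinset]
  simp only [SimpleGraph.mem_neighborFinset, ringGraph, Finset.mem_insert,
    Finset.mem_singleton, Fin.ext_iff, ne_eq]
  have hus := mod_succ_eq n u.val hu
  constructor
  · rintro ⟨hne, h | h⟩
    · left; exact h.symm
    · right
      rw [hus] at h
      rw [hp]
      split_ifs at h ⊢ <;> omega
  · rintro (h | h)
    · refine ⟨?_, Or.inl h.symm⟩
      rw [hs] at h
      split_ifs at h <;> omega
    · refine ⟨?_, Or.inr ?_⟩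
      · rw [hp] at h
        split_ifs at h <;> omega
      · rw [hp] at h
        rw [hus]
        split_ifs at h ⊢ <;> omega

lemma ring_succ_ne_pred {n : ℕ} (hn : 3 ≤ n) (v : Fin n) :
    (v.val + 1) % n ≠ (v.val + n - 1) % n := by
  have hv := v.isLt
  rw [mod_succ_eq n v.val hv, mod_pred_eq n v.val hv]
  split_ifs <;> omega

lemma ring_card_neighbors {n : ℕ} (hn : 3 ≤ n) (v : Fin n) :
    ((ringGraph n).neighborFinset v).card = 2 := by
  rw [ring_neighborFinset hn v]
  rw [Finset.card_insert_of_notMem (by simp [Fin.ext_iff]; exact ring_succ_ne_pred hn v)]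
  simp

end ring
section parts
variable {V : Type*} [Fintype V] [DecidableEq V]

omit [Fintype V] in
lemma two_le_inter_iff {N A : Finset V} (hN : N.card = 2) :
    2 ≤ (N ∩ A).card ↔ N ⊆ A := by
  constructor
  · intro h
    have hsub : N ∩ A ⊆ N := Finset.inter_subset_left
    have heq : N ∩ A = N := Finset.eq_of_subset_of_card_le hsub (by omega)
    intro x hx
    exact Finset.mem_of_mem_inter_right (heq ▸ hx)
  · intro h
    rw [Finset.inter_eq_left.mpr h, hN]

lemma part1 {n lam : ℕ} (hn : 3 ≤ n) (hlam : 1 ≤ lam) (S : Finset (Fin n)) :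
    isTargetSet (ringGraph n) (fun _ => 2) lam S ↔
      ∀ v : Fin n, v ∉ S → ∃ r : ℕ, 1 ≤ r ∧
        ∀ u : Fin n, (ringGraph n).Adj v u →
          u ∈ activeSet (ringGraph n) (fun _ => 2) lam S r := by
  constructor
  · rintro ⟨R, hR⟩ v hv
    have hmem : v ∈ influenced (ringGraph n) (fun _ => 2) lam S R :=
      hR ▸ Finset.mem_univ v
    rw [mem_influenced_iff] at hmem
    rcases hmem with h | ⟨r', _, h1, hc⟩
    · exact absurd h hv
    · refine ⟨r', h1, fun u hu => ?_⟩
      exact (two_le_inter_iff (ring_card_neighbors hn v)).mp hc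
        (((ringGraph n).mem_neighborFinset v u).mpr hu)
  · intro h
    have key : ∀ v : Fin n, ∃ r, v ∈ influenced (ringGraph n) (fun _ => 2) lam S r := by
      intro v
      by_cases hv : v ∈ S
      · exact ⟨0, by rw [influenced]; exact hv⟩
      · obtain ⟨r, h1, hact⟩ := h v hv
        refine ⟨r, (mem_influenced_iff _ _ _ _ _ _).mpr (Or.inr ⟨r, le_rfl, h1, ?_⟩)⟩
        rw [two_le_inter_iff (ring_card_neighbors hn v)]
        intro u hu
        exact hact u (((ringGraph n).mem_neighborFinset v u).mp hu)
    choose f hf using key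
    refine ⟨Finset.univ.sup f, Finset.eq_univ_iff_forall.mpr fun v => ?_⟩
    exact influenced_mono _ _ _ _ (Finset.le_sup (Finset.mem_univ v)) (hf v)

lemma not_both_outside {n lam : ℕ} (hn : 3 ≤ n) (S : Finset (Fin n))
    (hT : isTargetSet (ringGraph n) (fun _ => 2) lam S) :
    ∀ v u : Fin n, (ringGraph n).Adj v u → v ∉ S → u ∈ S := by
  have claim : ∀ r (v u : Fin n), (ringGraph n).Adj v u → v ∉ S → u ∉ S →
      v ∉ influenced (ringGraph n) (fun _ => 2) lam S r := by
    intro r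
    induction r using Nat.strong_induction_on with
    | _ r ih =>
      intro v u hadj hv hu hmem
      rw [mem_influenced_iff] at hmem
      rcases hmem with h | ⟨r', hr, h1, hc⟩
      · exact hv h
      · have hsub := (two_le_inter_iff (ring_card_neighbors hn v)).mp hc
        have hu1 : u ∈ activeSet (ringGraph n) (fun _ => 2) lam S r' :=
          hsub (((ringGraph n).mem_neighborFinset v u).mpr hadj)
        have hu2 : u ∈ influenced (ringGraph n) (fun _ => 2) lam S (r' - 1) :=
          activeSet_subset _ _ _ _ _ hu1
        exact ih (r' - 1) (by omega) u v hadj.symm hu hv hu2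
  intro v u hadj hv
  by_contra hu
  obtain ⟨R, hR⟩ := hT
  exact claim R v u hadj hv hu (hR ▸ Finset.mem_univ v)

lemma ring_adj_succ {n : ℕ} (hn : 3 ≤ n) (v : Fin n) :
    (ringGraph n).Adj v ⟨(v.val + 1) % n, ring_succ_lt n v⟩ := by
  have hv := v.isLt
  have hs := mod_succ_eq n v.val hv
  refine ⟨?_, Or.inl rfl⟩
  intro h
  rw [Fin.ext_iff] at h
  simp only at h
  rw [hs] at h
  split_ifs at h <;> omega

lemma part3 {n lam : ℕ} (hn : 3 ≤ n) (S : Finset (Fin n))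
    (hT : isTargetSet (ringGraph n) (fun _ => 2) lam S) :
    (n + 1) / 2 ≤ S.card := by
  have hmap : ∀ v ∈ Finset.univ \ S,
      (⟨(v.val + 1) % n, ring_succ_lt n v⟩ : Fin n) ∈ S := by
    intro v hv
    rw [Finset.mem_sdiff] at hv
    exact not_both_outside hn S hT v _ (ring_adj_succ hn v) hv.2
  have hinj : ∀ v ∈ Finset.univ \ S, ∀ w ∈ Finset.univ \ S,
      (⟨(v.val + 1) % n, ring_succ_lt n v⟩ : Fin n) =
      (⟨(w.val + 1) % n, ring_succ_lt n w⟩ : Fin n) → v = w := by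
    intro v _ w _ h
    rw [Fin.ext_iff] at h ⊢
    simp only at h
    rw [mod_succ_eq n v.val v.isLt, mod_succ_eq n w.val w.isLt] at h
    have hv := v.isLt; have hw := w.isLt
    split_ifs at h <;> omega
  have hcard := Finset.card_le_card_of_injOn _ hmap hinj
  have h1 : (Finset.univ \ S).card = n - S.card := by
    rw [Finset.card_sdiff_of_subset (Finset.subset_univ S), Finset.card_univ, Fintype.card_fin]
  have h2 : S.card ≤ n := by
    have := Finset.card_le_card (Finset.subset_univ S)
    simpa using this
  omega

end parts
section part2

lemma card_evens_range (n : ℕ) :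
    ((Finset.range n).filter (fun i => i % 2 = 0)).card = (n + 1) / 2 := by
  induction n with
  | zero => simp
  | succ n ih =>
    rw [Finset.range_add_one, Finset.filter_insert]
    by_cases h : n % 2 = 0
    · rw [if_pos h, Finset.card_insert_of_notMem (by simp)]
      omega
    · rw [if_neg h]
      omega

lemma card_evens_fin (n : ℕ) :
    ((Finset.univ : Finset (Fin n)).filter (fun i => i.val % 2 = 0)).card = (n + 1) / 2 := by
  rw [← card_evens_range n]
  apply Finset.card_bij (fun i _ => i.val)
  · intro a ha
    rw [Finset.mem_filter] at ha ⊢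
    exact ⟨Finset.mem_range.mpr a.isLt, ha.2⟩
  · intro a _ b _ h
    exact Fin.ext h
  · intro b hb
    rw [Finset.mem_filter, Finset.mem_range] at hb
    exact ⟨⟨b, hb.1⟩, Finset.mem_filter.mpr ⟨Finset.mem_univ _, hb.2⟩, rfl⟩

lemma part2 {n lam : ℕ} (hn : 3 ≤ n) (hlam : 1 ≤ lam) :
    ∃ S : Finset (Fin n),
      isTargetSet (ringGraph n) (fun _ => 2) lam S ∧ S.card = (n + 1) / 2 := by
  refine ⟨(Finset.univ : Finset (Fin n)).filter (fun i => i.val % 2 = 0),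
    ?_, card_evens_fin n⟩
  set S := (Finset.univ : Finset (Fin n)).filter (fun i => i.val % 2 = 0) with hS
  refine ⟨1, ?_⟩
  have hact : activeSet (ringGraph n) (fun _ => 2) lam S 1 = S := by
    rw [activeSet]
    simp [hlam]
    rw [influenced]
  rw [show (1 : ℕ) = 0 + 1 from rfl, influenced_succ]
  apply Finset.eq_univ_iff_forall.mpr
  intro v
  rw [Finset.mem_union]
  by_cases hv : v ∈ S
  · left; rw [influenced]; exact hv
  · right
    rw [Finset.mem_filter]
    refine ⟨Finset.mem_univ v, ?_⟩
    rw [show (0 + 1 : ℕ) = 1 from rfl, hact,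
      two_le_inter_iff (ring_card_neighbors hn v), ring_neighborFinset hn v]
    have hvodd : v.val % 2 = 1 := by
      have : v.val % 2 ≠ 0 := by
        intro h
        exact hv (Finset.mem_filter.mpr ⟨Finset.mem_univ v, h⟩)
      omega
    have hv1 := v.isLt
    -- n must be even if v = n-1 (since v odd); show both neighbors even
    intro u hu
    rw [Finset.mem_insert, Finset.mem_singleton] at hu
    rw [hS, Finset.mem_filter]
    refine ⟨Finset.mem_univ u, ?_⟩
    rcases hu with rfl | rfl
    · simp only
      rw [mod_succ_eq n v.val hv1]
      split_ifs with h
      · rfl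
      · omega
    · simp only
      rw [mod_pred_eq n v.val hv1]
      split_ifs with h
      · omega
      · omega

end part2
/-- in the ring with all thresholds 2, `S` is a TWC target set iff
every vertex outside `S` has both of its neighbours simultaneously active at
some round; and the minimum size of a TWC target set is `⌈n/2⌉`. -/
theorem stmt15 (n lam : ℕ) (hn : 3 ≤ n) (hlam : 1 ≤ lam) :
    (∀ S : Finset (Fin n),
      isTargetSet (ringGraph n) (fun _ => 2) lam S ↔
        ∀ v : Fin n, v ∉ S → ∃ r : ℕ, 1 ≤ r ∧
          ∀ u : Fin n, (ringGraph n).Adj v u →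
            u ∈ activeSet (ringGraph n) (fun _ => 2) lam S r) ∧
    (∃ S : Finset (Fin n),
      isTargetSet (ringGraph n) (fun _ => 2) lam S ∧ S.card = (n + 1) / 2) ∧
    (∀ S : Finset (Fin n),
      isTargetSet (ringGraph n) (fun _ => 2) lam S → (n + 1) / 2 ≤ S.card) := by
  exact ⟨fun S => part1 hn hlam S, part2 hn hlam, fun S hS => part3 hn S hS⟩
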